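/- arXiv:1209.6236 — 2 statements merged into one kernel-verified Lean document; each statement's English description precedes it below -/
import Mathlib

section
/- Let (M, d, μ) be a doubling metric measure space with homogeneous dimension Q (i.e. μ(B(x,λr)) ≤ C λ^Q μ(B(x,r)) for λ ≥ 1), let ε > 0 and Q/(Q+ε) < p ≤ 1. Then there is a constant C' such that for every z ∈ M and R > 0, ∫_{{x : d(x,z) ≥ R}} [ V(x,z) · d(x,z)^ε ]^{−p} dμ(x) ≤ C' R^{−pε} μ(B(z,R))^{1−p}, where V(x,z) = μ(B(z, d(x,z))). -/
open Metric MeasureTheory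
open scoped ENNReal

/-- Annulus decomposition estimate: in a doubling space of homogeneous dimension `Q`,
for `Q/(Q+ε) < p ≤ 1`, `∫_{d(x,z) ≥ R} (V(x,z) d(x,z)^ε)^{-p} dμ ≲ R^{-pε} μ(B(z,R))^{1-p}`. -/
theorem annulus_integral_bound {M : Type*} [MetricSpace M] [MeasurableSpace M]
    (μ : Measure M) (C Q : ℝ) (hC : 0 < C) (hQ : 0 < Q)
    (hdoub : ∀ (x : M) (r lam : ℝ), 0 < r → 1 ≤ lam →
      μ (ball x (lam * r)) ≤ ENNReal.ofReal (C * lam ^ Q) * μ (ball x r))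
    (ε p : ℝ) (hε : 0 < ε) (hp1 : Q / (Q + ε) < p) (hp2 : p ≤ 1) :
    ∃ C' : ℝ, 0 < C' ∧ ∀ (z : M) (R : ℝ), 0 < R →
      ∫⁻ x in {x : M | R ≤ dist x z},
          (μ (ball z (dist x z)) * ENNReal.ofReal (dist x z ^ ε)) ^ (-p) ∂μ ≤
        ENNReal.ofReal (C' * R ^ (-(p * ε))) * μ (ball z R) ^ (1 - p) := by
  have hQε : 0 < Q + ε := by linarith
  have hpQ : Q < p * (Q + ε) := by
    have := (div_lt_iff₀ hQε).mp hp1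
    linarith
  have hp0 : 0 < p := lt_trans (div_pos hQ hQε) hp1
  set δ : ℝ := p * (Q + ε) - Q with hδdef
  have hδ : 0 < δ := by rw [hδdef]; linarith
  set r : ℝ := (2 : ℝ) ^ (-δ) with hrdef
  have hr0 : 0 < r := Real.rpow_pos_of_pos two_pos _
  have hr1 : r < 1 := Real.rpow_lt_one_of_one_lt_of_neg one_lt_two (by linarith)
  set K : ℝ := C * 2 ^ Q * max 1 C with hKdef
  have h2Q : (0 : ℝ) < (2 : ℝ) ^ Q := Real.rpow_pos_of_pos two_pos _
  have hK : 0 < K := by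
    rw [hKdef]
    exact mul_pos (mul_pos hC h2Q) (lt_max_of_lt_left one_pos)
  refine ⟨K * (1 - r)⁻¹, mul_pos hK (inv_pos.mpr (by linarith)), fun z R hR => ?_⟩
  set f : M → ℝ≥0∞ := fun x =>
    (μ (ball z (dist x z)) * ENNReal.ofReal (dist x z ^ ε)) ^ (-p) with hfdef
  by_cases htop : μ (ball z R) = ⊤
  · -- the integrand vanishes since all relevant balls have infinite measure
    have hf0 : ∀ x ∈ {x : M | R ≤ dist x z}, f x ≤ 0 := by
      intro x hx
      have hRd : R ≤ dist x z := hx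
      have hdt : μ (ball z (dist x z)) = ⊤ :=
        top_le_iff.mp (htop ▸ measure_mono (ball_subset_ball hRd))
      have hdpos : (0 : ℝ) < dist x z := lt_of_lt_of_le hR hRd
      have hne : ENNReal.ofReal (dist x z ^ ε) ≠ 0 := by
        simp only [ne_eq, ENNReal.ofReal_eq_zero, not_le]
        exact Real.rpow_pos_of_pos hdpos _
      rw [hfdef]
      simp only
      rw [hdt, ENNReal.top_mul hne, ENNReal.top_rpow_of_neg (neg_lt_zero.mpr hp0)]
    calc ∫⁻ x in {x : M | R ≤ dist x z}, f x ∂μ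
        ≤ ∫⁻ _ in {x : M | R ≤ dist x z}, 0 ∂μ :=
          setLIntegral_mono measurable_const hf0
      _ = 0 := by simp
      _ ≤ _ := zero_le
  by_cases hzero : μ (ball z R) = 0
  · -- the whole measure vanishes
    have hball : ∀ t : ℝ, μ (ball z t) = 0 := by
      intro t
      rcases le_or_gt t R with h | h
      · exact measure_mono_null (ball_subset_ball h) hzero
      · have h1 : (1 : ℝ) ≤ t / R := by
          rw [le_div_iff₀ hR]; linarith
        have hd := hdoub z R (t / R) hR h1
        rw [div_mul_cancel₀ _ hR.ne'] at hd
        rw [hzero, mul_zero] at hd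
        exact le_antisymm hd zero_le
    have hμ : μ = 0 := by
      rw [← Measure.measure_univ_eq_zero]
      have hcover : (Set.univ : Set M) ⊆ ⋃ n : ℕ, ball z (n + 1) := by
        intro x _
        obtain ⟨n, hn⟩ := exists_nat_gt (dist x z)
        exact Set.mem_iUnion.mpr ⟨n, by simp only [mem_ball]; push_cast; linarith⟩
      refine le_antisymm ?_ zero_le
      calc μ Set.univ ≤ μ (⋃ n : ℕ, ball z (n + 1)) := measure_mono hcover
        _ ≤ ∑' n : ℕ, μ (ball z ((n : ℝ) + 1)) := measure_iUnion_le _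
        _ = 0 := by simp [hball]
    simp [hμ]
  -- main case: 0 < μ(ball z R) < ⊤
  set B0 : ℝ≥0∞ := μ (ball z R) with hB0def
  have h2k : ∀ k : ℕ, (1 : ℝ) ≤ 2 ^ k := fun k => by
    exact_mod_cast Nat.one_le_two_pow
  have hRk : ∀ k : ℕ, (0 : ℝ) < 2 ^ k * R := fun k => by positivity
  have hRle : ∀ k : ℕ, R ≤ 2 ^ k * R := fun k =>
    le_mul_of_one_le_left hR.le (h2k k)
  set B : ℕ → ℝ≥0∞ := fun k => μ (ball z (2 ^ k * R)) with hBdef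
  have hBpos : ∀ k, B k ≠ 0 := by
    intro k h
    exact hzero (measure_mono_null (ball_subset_ball (hRle k)) h)
  have hBle : ∀ k : ℕ, B k ≤ ENNReal.ofReal (C * ((2 : ℝ) ^ k) ^ Q) * B0 :=
    fun k => hdoub z R (2 ^ k) hR (h2k k)
  have hBtop : ∀ k, B k ≠ ⊤ := fun k =>
    ne_top_of_le_ne_top (ENNReal.mul_ne_top ENNReal.ofReal_ne_top htop) (hBle k)
  -- annuli
  set A : ℕ → Set M := fun k =>
    {x : M | 2 ^ k * R ≤ dist x z ∧ dist x z < 2 ^ (k + 1) * R} with hAdef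
  have hcover : {x : M | R ≤ dist x z} ⊆ ⋃ k : ℕ, A k := by
    intro x hx
    have hxR : R ≤ dist x z := hx
    have hd1 : (1 : ℝ) ≤ dist x z / R := by rw [le_div_iff₀ hR]; linarith
    obtain ⟨k, hk1, hk2⟩ : ∃ k : ℕ, (2 : ℝ) ^ k ≤ dist x z / R ∧
        dist x z / R < 2 ^ (k + 1) := by
      set n := ⌊dist x z / R⌋₊ with hndef
      have hn1 : 1 ≤ n := Nat.le_floor (by exact_mod_cast hd1)
      refine ⟨Nat.log 2 n, ?_, ?_⟩
      · calc (2 : ℝ) ^ Nat.log 2 n ≤ (n : ℝ) := by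
              exact_mod_cast Nat.pow_log_le_self 2 (by omega)
          _ ≤ dist x z / R := Nat.floor_le (by linarith)
      · have h1 : n < 2 ^ (Nat.log 2 n + 1) := Nat.lt_pow_succ_log_self one_lt_two n
        have h2 : (n : ℝ) + 1 ≤ 2 ^ (Nat.log 2 n + 1) := by
          exact_mod_cast Nat.succ_le_of_lt h1
        calc dist x z / R < (n : ℝ) + 1 := Nat.lt_floor_add_one _
          _ ≤ 2 ^ (Nat.log 2 n + 1) := h2
    refine Set.mem_iUnion.mpr ⟨k, ?_, ?_⟩
    · exact (le_div_iff₀ hR).mp hk1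
    · exact (div_lt_iff₀ hR).mp hk2
  -- per-annulus bound
  have hkey : ∀ k : ℕ, ∫⁻ x in A k, f x ∂μ ≤
      ENNReal.ofReal (K * R ^ (-(p * ε)) * r ^ k) * B0 ^ (1 - p) := by
    intro k
    set a : ℝ≥0∞ := ENNReal.ofReal (((2 : ℝ) ^ k * R) ^ ε) with hadef
    have hapos : (0 : ℝ) < ((2 : ℝ) ^ k * R) ^ ε := Real.rpow_pos_of_pos (hRk k) _
    -- pointwise bound on the annulus
    have hptwise : ∀ x ∈ A k, f x ≤ (B k * a) ^ (-p) := by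
      intro x hx
      have hd1 : 2 ^ k * R ≤ dist x z := hx.1
      have hle : B k * a ≤ μ (ball z (dist x z)) * ENNReal.ofReal (dist x z ^ ε) := by
        refine mul_le_mul' (measure_mono (ball_subset_ball hd1)) ?_
        exact ENNReal.ofReal_le_ofReal (Real.rpow_le_rpow (hRk k).le hd1 hε.le)
      rw [hfdef]
      simp only
      rw [ENNReal.rpow_neg, ENNReal.rpow_neg]
      exact ENNReal.inv_le_inv.mpr (ENNReal.rpow_le_rpow hle hp0.le)
    have hAk : μ (A k) ≤ ENNReal.ofReal (C * (2 : ℝ) ^ Q) * B k := by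
      have hsub : A k ⊆ ball z (2 ^ (k + 1) * R) := fun x hx => by
        simp only [mem_ball]; exact hx.2
      have heq : (2 : ℝ) ^ (k + 1) * R = 2 * (2 ^ k * R) := by ring
      calc μ (A k) ≤ μ (ball z (2 ^ (k + 1) * R)) := measure_mono hsub
        _ = μ (ball z (2 * (2 ^ k * R))) := by rw [heq]
        _ ≤ ENNReal.ofReal (C * (2 : ℝ) ^ Q) * B k :=
            hdoub z (2 ^ k * R) 2 (hRk k) one_le_two
    have hstep1 : ∫⁻ x in A k, f x ∂μ ≤ (B k * a) ^ (-p) * μ (A k) := by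
      calc ∫⁻ x in A k, f x ∂μ ≤ ∫⁻ _ in A k, (B k * a) ^ (-p) ∂μ :=
            setLIntegral_mono measurable_const hptwise
        _ = (B k * a) ^ (-p) * μ (A k) := by rw [setLIntegral_const]
    -- algebra in ℝ≥0∞
    have hmul : (B k * a) ^ (-p) = B k ^ (-p) * a ^ (-p) :=
      ENNReal.mul_rpow_of_ne_top (hBtop k) ENNReal.ofReal_ne_top _
    have hBk1p : B k ^ (-p) * B k = B k ^ (1 - p) := by
      nth_rewrite 2 [← ENNReal.rpow_one (B k)]
      rw [← ENNReal.rpow_add _ _ (hBpos k) (hBtop k)]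
      congr 1
      ring
    have ha : a ^ (-p) = ENNReal.ofReal ((((2 : ℝ) ^ k * R) ^ ε) ^ (-p)) := by
      rw [hadef, ENNReal.ofReal_rpow_of_pos hapos]
    have hB1p : B k ^ (1 - p) ≤
        ENNReal.ofReal ((C * ((2 : ℝ) ^ k) ^ Q) ^ (1 - p)) * B0 ^ (1 - p) := by
      have h1 : (0 : ℝ) ≤ 1 - p := by linarith
      calc B k ^ (1 - p) ≤ (ENNReal.ofReal (C * ((2 : ℝ) ^ k) ^ Q) * B0) ^ (1 - p) :=
            ENNReal.rpow_le_rpow (hBle k) h1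
        _ = ENNReal.ofReal (C * ((2 : ℝ) ^ k) ^ Q) ^ (1 - p) * B0 ^ (1 - p) :=
            ENNReal.mul_rpow_of_nonneg _ _ h1
        _ = ENNReal.ofReal ((C * ((2 : ℝ) ^ k) ^ Q) ^ (1 - p)) * B0 ^ (1 - p) := by
            rw [ENNReal.ofReal_rpow_of_pos (by positivity)]
    -- real-number estimate of the coefficient
    have hreal : C * (2 : ℝ) ^ Q * ((C * ((2 : ℝ) ^ k) ^ Q) ^ (1 - p) *
        (((2 : ℝ) ^ k * R) ^ ε) ^ (-p)) ≤ K * R ^ (-(p * ε)) * r ^ k := by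
      have h2cast : ((2 : ℝ) ^ k : ℝ) = (2 : ℝ) ^ (k : ℝ) :=
        (Real.rpow_natCast 2 k).symm
      have hCp : C ^ (1 - p) ≤ max 1 C := by
        rcases le_total C 1 with h | h
        · calc C ^ (1 - p) ≤ C ^ (0 : ℝ) :=
              Real.rpow_le_rpow_of_exponent_ge hC h (by linarith)
            _ = 1 := Real.rpow_zero C
            _ ≤ max 1 C := le_max_left _ _
        · calc C ^ (1 - p) ≤ C ^ (1 : ℝ) :=
              Real.rpow_le_rpow_of_exponent_le h (by linarith)
            _ = C := Real.rpow_one C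
            _ ≤ max 1 C := le_max_right _ _
      have e1 : ((2 : ℝ) ^ k * R) ^ ε = (2 : ℝ) ^ ((k : ℝ) * ε) * R ^ ε := by
        rw [Real.mul_rpow (by positivity) hR.le, h2cast,
          ← Real.rpow_mul (by norm_num)]
      have e2 : ((2 : ℝ) ^ ((k : ℝ) * ε) * R ^ ε) ^ (-p)
          = (2 : ℝ) ^ ((k : ℝ) * ε * (-p)) * (R ^ ε) ^ (-p) := by
        rw [Real.mul_rpow (by positivity) (by positivity),
          ← Real.rpow_mul (by norm_num)]
      have e3 : (R ^ ε) ^ (-p) = R ^ (-(p * ε)) := by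
        rw [← Real.rpow_mul hR.le]; ring_nf
      have e4 : (C * ((2 : ℝ) ^ k) ^ Q) ^ (1 - p)
          = C ^ (1 - p) * (2 : ℝ) ^ ((k : ℝ) * Q * (1 - p)) := by
        rw [h2cast, ← Real.rpow_mul (by norm_num), Real.mul_rpow hC.le (by positivity),
          ← Real.rpow_mul (by norm_num)]
      have e5 : r ^ k = (2 : ℝ) ^ (-δ * (k : ℝ)) := by
        rw [hrdef, ← Real.rpow_natCast ((2 : ℝ) ^ (-δ)) k,
          ← Real.rpow_mul (by norm_num)]
      have e6 : (2 : ℝ) ^ ((k : ℝ) * Q * (1 - p)) * (2 : ℝ) ^ ((k : ℝ) * ε * (-p))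
          = (2 : ℝ) ^ (-δ * (k : ℝ)) := by
        rw [← Real.rpow_add two_pos]
        congr 1
        rw [hδdef]; ring
      rw [e1, e2, e3, e4, e5, hKdef]
      have eL : C * (2 : ℝ) ^ Q * (C ^ (1 - p) * (2 : ℝ) ^ ((k : ℝ) * Q * (1 - p)) *
            ((2 : ℝ) ^ ((k : ℝ) * ε * (-p)) * R ^ (-(p * ε))))
          = C * (2 : ℝ) ^ Q * R ^ (-(p * ε)) * (2 : ℝ) ^ (-δ * (k : ℝ)) * C ^ (1 - p) := by
        rw [← e6]; ring
      rw [eL]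
      have hfac : (0 : ℝ) ≤ C * (2 : ℝ) ^ Q * R ^ (-(p * ε)) * (2 : ℝ) ^ (-δ * (k : ℝ)) := by
        positivity
      calc C * (2 : ℝ) ^ Q * R ^ (-(p * ε)) * (2 : ℝ) ^ (-δ * (k : ℝ)) * C ^ (1 - p)
          ≤ C * (2 : ℝ) ^ Q * R ^ (-(p * ε)) * (2 : ℝ) ^ (-δ * (k : ℝ)) * max 1 C :=
            mul_le_mul_of_nonneg_left hCp hfac
        _ = C * (2 : ℝ) ^ Q * max 1 C * R ^ (-(p * ε)) * (2 : ℝ) ^ (-δ * (k : ℝ)) := by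
            ring
    calc ∫⁻ x in A k, f x ∂μ ≤ (B k * a) ^ (-p) * μ (A k) := hstep1
      _ ≤ (B k ^ (-p) * a ^ (-p)) * (ENNReal.ofReal (C * (2 : ℝ) ^ Q) * B k) := by
          rw [← hmul]; exact mul_le_mul_right hAk _
      _ = ENNReal.ofReal (C * (2 : ℝ) ^ Q) * ((B k ^ (-p) * B k) * a ^ (-p)) := by
          ring
      _ = ENNReal.ofReal (C * (2 : ℝ) ^ Q) * (B k ^ (1 - p) * a ^ (-p)) := by
          rw [hBk1p]
      _ ≤ ENNReal.ofReal (C * (2 : ℝ) ^ Q) *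
            ((ENNReal.ofReal ((C * ((2 : ℝ) ^ k) ^ Q) ^ (1 - p)) * B0 ^ (1 - p)) *
              ENNReal.ofReal ((((2 : ℝ) ^ k * R) ^ ε) ^ (-p))) := by
          rw [ha]; exact mul_le_mul_right (mul_le_mul_left hB1p _) _
      _ = ENNReal.ofReal (C * (2 : ℝ) ^ Q * ((C * ((2 : ℝ) ^ k) ^ Q) ^ (1 - p) *
            (((2 : ℝ) ^ k * R) ^ ε) ^ (-p))) * B0 ^ (1 - p) := by
          simp only [ENNReal.ofReal_mul (mul_nonneg hC.le h2Q.le),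
            ENNReal.ofReal_mul hC.le,
            ENNReal.ofReal_mul (Real.rpow_nonneg (by positivity : (0:ℝ) ≤ C * ((2:ℝ) ^ k) ^ Q) (1 - p))]
          ring
      _ ≤ ENNReal.ofReal (K * R ^ (-(p * ε)) * r ^ k) * B0 ^ (1 - p) :=
          mul_le_mul_left (ENNReal.ofReal_le_ofReal hreal) _
  calc ∫⁻ x in {x : M | R ≤ dist x z}, f x ∂μ
      ≤ ∫⁻ x in ⋃ k : ℕ, A k, f x ∂μ := lintegral_mono_set hcover
    _ ≤ ∑' k : ℕ, ∫⁻ x in A k, f x ∂μ := lintegral_iUnion_le _ _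
    _ ≤ ∑' k : ℕ, ENNReal.ofReal (K * R ^ (-(p * ε)) * r ^ k) * B0 ^ (1 - p) :=
        ENNReal.tsum_le_tsum hkey
    _ = (∑' k : ℕ, ENNReal.ofReal (K * R ^ (-(p * ε)) * r ^ k)) * B0 ^ (1 - p) :=
        ENNReal.tsum_mul_right
    _ = ENNReal.ofReal (K * (1 - r)⁻¹ * R ^ (-(p * ε))) * B0 ^ (1 - p) := by
        rw [← ENNReal.ofReal_tsum_of_nonneg
          (fun k => mul_nonneg (mul_nonneg hK.le (Real.rpow_nonneg hR.le _))
            (pow_nonneg hr0.le k))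
          ((summable_geometric_of_lt_one hr0.le hr1).mul_left _)]
        congr 1
        rw [tsum_mul_left, tsum_geometric_of_lt_one hr0.le hr1]
        ring
    _ = ENNReal.ofReal (K * (1 - r)⁻¹ * R ^ (-(p * ε))) * μ (ball z R) ^ (1 - p) := by
        rw [hB0def]
end

section
/- Let (M,d,μ) be a doubling metric measure space and ε > 0. There is a constant C such that for all x, y ∈ M and all scales r, s > 0: ∫_M [1/(V_r(x) + V(x,z))] · (r/(r + d(x,z)))^ε · [1/(V_s(y) + V(z,y))] · (s/(s + d(z,y)))^ε dμ(z) ≤ C · [1/(V_t(x) + V(x,y))] · (t/(t + d(x,y)))^ε, where t = max(r,s), V_r(x) = μ(B(x,r)) and V(x,y) = μ(B(x, d(x,y))). -/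
open Metric MeasureTheory
open scoped ENNReal

section helpers

lemma inv_le_mul_inv_of_le {D E : ℝ≥0∞} {c : ℝ} (hc : 0 < c) (hE : E ≠ 0)
    (h : E ≤ ENNReal.ofReal c * D) : D⁻¹ ≤ ENNReal.ofReal c * E⁻¹ := by
  have hc0 : ENNReal.ofReal c ≠ 0 := by
    simp [ENNReal.ofReal_eq_zero, not_le, hc]
  have hct : ENNReal.ofReal c ≠ ⊤ := ENNReal.ofReal_ne_top
  have h1 : (ENNReal.ofReal c)⁻¹ * E ≤ D := by
    rw [← ENNReal.mul_le_mul_iff_right hc0 hct, ← mul_assoc, ENNReal.mul_inv_cancel hc0 hct, one_mul]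
    exact h
  calc D⁻¹ ≤ ((ENNReal.ofReal c)⁻¹ * E)⁻¹ := ENNReal.inv_le_inv.mpr h1
    _ = ENNReal.ofReal c * E⁻¹ := by
        rw [ENNReal.mul_inv (Or.inl (ENNReal.inv_ne_zero.mpr hct))
          (Or.inl (ENNReal.inv_ne_top.mpr hc0)), inv_inv]

lemma kernel_le {D E : ℝ≥0∞} {c a b ε : ℝ} (hε : 0 ≤ ε) (hc : 0 < c) (hE : E ≠ 0)
    (hDE : E ≤ ENNReal.ofReal c * D) (ha : 0 ≤ a) (hb : 0 ≤ b) (hab : a ≤ 2 * b) :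
    D⁻¹ * ENNReal.ofReal (a ^ ε) ≤
      ENNReal.ofReal (c * 2 ^ ε) * (E⁻¹ * ENNReal.ofReal (b ^ ε)) := by
  have h1 := inv_le_mul_inv_of_le hc hE hDE
  have h2 : a ^ ε ≤ 2 ^ ε * b ^ ε := by
    calc a ^ ε ≤ (2 * b) ^ ε := Real.rpow_le_rpow ha hab hε
      _ = 2 ^ ε * b ^ ε := Real.mul_rpow (by norm_num) hb
  calc D⁻¹ * ENNReal.ofReal (a ^ ε)
      ≤ (ENNReal.ofReal c * E⁻¹) * ENNReal.ofReal (2 ^ ε * b ^ ε) :=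
        mul_le_mul' h1 (ENNReal.ofReal_le_ofReal h2)
    _ = ENNReal.ofReal (c * 2 ^ ε) * (E⁻¹ * ENNReal.ofReal (b ^ ε)) := by
        rw [ENNReal.ofReal_mul hc.le, ENNReal.ofReal_mul (by positivity)]
        ring

lemma pow_rpow_aux (k : ℕ) {ε : ℝ} (hε : 0 ≤ ε) :
    (((2:ℝ)⁻¹) ^ k) ^ ε = (((2:ℝ)⁻¹) ^ ε) ^ k := by
  rw [← Real.rpow_natCast ((2:ℝ)⁻¹) k, ← Real.rpow_natCast (((2:ℝ)⁻¹) ^ ε) k,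
    ← Real.rpow_mul (by norm_num), ← Real.rpow_mul (by norm_num), mul_comm]

variable {M : Type*} [MetricSpace M] [MeasurableSpace M] [BorelSpace M]

/-- Generic annuli integration bound. -/
lemma annuli_lintegral_le (μ : Measure M) (c : M) {s : ℝ} (hs : 0 < s)
    (hpos : ∀ (x : M) (r : ℝ), 0 < r → 0 < μ (ball x r))
    (hfin : ∀ (x : M) (r : ℝ), μ (ball x r) < ⊤)
    (g : M → ℝ≥0∞) (K : ℝ≥0∞) (δ : ℝ≥0∞)
    (h0 : ∀ z, dist z c < s → g z ≤ (μ (ball c s))⁻¹)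
    (hk : ∀ (k : ℕ) (z : M), 2 ^ k * s ≤ dist z c → dist z c < 2 ^ (k + 1) * s →
      g z ≤ δ ^ k * K * (μ (ball c (2 ^ (k + 1) * s)))⁻¹) :
    ∫⁻ z, g z ∂μ ≤ 1 + (1 - δ)⁻¹ * K := by
  classical
  set S : ℕ → Set M := fun k =>
    Nat.rec (ball c s)
      (fun k _ => (fun z : M => dist z c) ⁻¹' (Set.Ico (2 ^ k * s) (2 ^ (k + 1) * s))) k with hSdef
  have hS0 : S 0 = ball c s := rfl
  have hSsucc : ∀ k : ℕ,
      S (k + 1) = (fun z : M => dist z c) ⁻¹' (Set.Ico (2 ^ k * s) (2 ^ (k + 1) * s)) :=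
    fun k => rfl
  have hmd : Measurable fun z : M => dist z c := (continuous_id.dist continuous_const).measurable
  have hcover : (Set.univ : Set M) ⊆ ⋃ k, S k := by
    intro z _
    by_cases h : dist z c < s
    · exact Set.mem_iUnion.2 ⟨0, by simpa [hS0] using h⟩
    · have hex : ∃ k : ℕ, dist z c < 2 ^ k * s := by
        obtain ⟨n, hn⟩ := pow_unbounded_of_one_lt (dist z c / s) (one_lt_two (α := ℝ))
        exact ⟨n, by rwa [div_lt_iff₀ hs] at hn⟩
      set n := Nat.find hex with hn
      have hspec : dist z c < 2 ^ n * s := Nat.find_spec hex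
      have hn0 : n ≠ 0 := by
        intro h0'
        apply h
        have := hspec
        rw [h0'] at this
        simpa using this
      obtain ⟨m, hm⟩ := Nat.exists_eq_succ_of_ne_zero hn0
      have hmin : ¬ dist z c < 2 ^ m * s := Nat.find_min hex (by omega)
      refine Set.mem_iUnion.2 ⟨m + 1, ?_⟩
      rw [hSsucc]
      refine ⟨not_lt.1 hmin, ?_⟩
      rw [hm] at hspec
      simpa using hspec
  have h00 : ∫⁻ z in S 0, g z ∂μ ≤ 1 := by
    have hmono : ∫⁻ z in S 0, g z ∂μ ≤ ∫⁻ _ in S 0, (μ (ball c s))⁻¹ ∂μ := by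
      refine setLIntegral_mono' (by rw [hS0]; exact measurableSet_ball) ?_
      intro z hz
      exact h0 z (by rwa [hS0, mem_ball] at hz)
    calc ∫⁻ z in S 0, g z ∂μ ≤ (μ (ball c s))⁻¹ * μ (S 0) := by
          rwa [setLIntegral_const] at hmono
      _ = 1 := by
          rw [hS0]
          exact ENNReal.inv_mul_cancel (hpos c s hs).ne' (hfin c s).ne
  have hterm : ∀ k : ℕ, ∫⁻ z in S (k + 1), g z ∂μ ≤ δ ^ k * K := by
    intro k
    have hrad : (0:ℝ) < 2 ^ (k + 1) * s := by positivity
    have hmeas : MeasurableSet (S (k + 1)) := by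
      rw [hSsucc]; exact hmd measurableSet_Ico
    have hmono : ∫⁻ z in S (k + 1), g z ∂μ ≤
        ∫⁻ _ in S (k + 1), (δ ^ k * K * (μ (ball c (2 ^ (k + 1) * s)))⁻¹) ∂μ := by
      refine setLIntegral_mono' hmeas ?_
      intro z hz
      rw [hSsucc] at hz
      exact hk k z hz.1 hz.2
    have hsub : S (k + 1) ⊆ ball c (2 ^ (k + 1) * s) := by
      intro z hz
      rw [hSsucc] at hz
      exact mem_ball.2 hz.2
    calc ∫⁻ z in S (k + 1), g z ∂μ
        ≤ δ ^ k * K * (μ (ball c (2 ^ (k + 1) * s)))⁻¹ * μ (S (k + 1)) := by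
          rwa [setLIntegral_const] at hmono
      _ ≤ δ ^ k * K * (μ (ball c (2 ^ (k + 1) * s)))⁻¹ * μ (ball c (2 ^ (k + 1) * s)) :=
          mul_le_mul_right (measure_mono hsub) _
      _ = δ ^ k * K * ((μ (ball c (2 ^ (k + 1) * s)))⁻¹ * μ (ball c (2 ^ (k + 1) * s))) := by
          rw [mul_assoc]
      _ ≤ δ ^ k * K * 1 := mul_le_mul_right
          (le_of_eq (ENNReal.inv_mul_cancel (hpos c _ hrad).ne' (hfin c _).ne)) _
      _ = δ ^ k * K := mul_one _
  calc ∫⁻ z, g z ∂μ = ∫⁻ z in Set.univ, g z ∂μ := (setLIntegral_univ g).symm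
    _ ≤ ∫⁻ z in ⋃ k, S k, g z ∂μ := lintegral_mono_set hcover
    _ ≤ ∑' k, ∫⁻ z in S k, g z ∂μ := lintegral_iUnion_le S g
    _ = (∫⁻ z in S 0, g z ∂μ) + ∑' k, ∫⁻ z in S (k + 1), g z ∂μ :=
        tsum_eq_zero_add' ENNReal.summable
    _ ≤ 1 + ∑' k : ℕ, δ ^ k * K := add_le_add h00 (ENNReal.tsum_le_tsum hterm)
    _ = 1 + (1 - δ)⁻¹ * K := by rw [ENNReal.tsum_mul_right, ENNReal.tsum_geometric]

end helpers

section corollaries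

variable {M : Type*} [MetricSpace M] [MeasurableSpace M] [BorelSpace M]
variable {μ : Measure M} {A : ℝ}

lemma ratio_pow_le {ε : ℝ} (hε : 0 < ε) (k : ℕ) {r u : ℝ} (hr : 0 < r)
    (hu : 2 ^ k * r ≤ u) : (r / (r + u)) ^ ε ≤ (((2:ℝ)⁻¹) ^ ε) ^ k := by
  have hu0 : 0 ≤ u := le_trans (by positivity) hu
  have h1 : r / (r + u) ≤ ((2:ℝ)⁻¹) ^ k := by
    rw [div_le_iff₀ (by positivity)]
    have h2 : ((2:ℝ)⁻¹) ^ k * (2 ^ k * r) = r := by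
      rw [← mul_assoc, ← mul_pow]
      norm_num
    calc r = ((2:ℝ)⁻¹) ^ k * (2 ^ k * r) := h2.symm
      _ ≤ ((2:ℝ)⁻¹) ^ k * (r + u) := by
          have : (2:ℝ) ^ k * r ≤ r + u := le_add_of_nonneg_of_le (le_of_lt hr) hu
          exact mul_le_mul_of_nonneg_left this (by positivity)
  calc (r / (r + u)) ^ ε ≤ (((2:ℝ)⁻¹) ^ k) ^ ε :=
      Real.rpow_le_rpow (by positivity) h1 hε.le
    _ = (((2:ℝ)⁻¹) ^ ε) ^ k := pow_rpow_aux k hε.le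

lemma ratio_pow_le_one {ε : ℝ} (hε : 0 < ε) {r u : ℝ} (hr : 0 < r) (hu : 0 ≤ u) :
    ENNReal.ofReal ((r / (r + u)) ^ ε) ≤ 1 := by
  have : (r / (r + u)) ^ ε ≤ 1 :=
    Real.rpow_le_one (by positivity) (by rw [div_le_one (by positivity)]; linarith) hε.le
  calc ENNReal.ofReal ((r / (r + u)) ^ ε) ≤ ENNReal.ofReal 1 := ENNReal.ofReal_le_ofReal this
    _ = 1 := ENNReal.ofReal_one

/-- Uniform bound for the integral of the `x`-centered kernel. -/
lemma int_kernel_x (μ : Measure M) (A : ℝ) (hA : 1 ≤ A)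
    (hdoub : ∀ (x : M) (r : ℝ), 0 < r →
      μ (ball x (2 * r)) ≤ ENNReal.ofReal A * μ (ball x r))
    (hpos : ∀ (x : M) (r : ℝ), 0 < r → 0 < μ (ball x r))
    (hfin : ∀ (x : M) (r : ℝ), μ (ball x r) < ⊤)
    {ε : ℝ} (hε : 0 < ε) (x : M) {r : ℝ} (hr : 0 < r) :
    ∫⁻ z, (μ (ball x r) + μ (ball x (dist x z)))⁻¹ *
        ENNReal.ofReal ((r / (r + dist x z)) ^ ε) ∂μ ≤
      1 + (1 - ENNReal.ofReal (((2:ℝ)⁻¹) ^ ε))⁻¹ * ENNReal.ofReal A := by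
  have hA0 : (0:ℝ) < A := lt_of_lt_of_le one_pos hA
  refine annuli_lintegral_le μ x hr hpos hfin _ (ENNReal.ofReal A)
    (ENNReal.ofReal (((2:ℝ)⁻¹) ^ ε)) ?_ ?_
  · intro z hz
    rw [dist_comm z x] at hz
    calc (μ (ball x r) + μ (ball x (dist x z)))⁻¹ * ENNReal.ofReal ((r / (r + dist x z)) ^ ε)
        ≤ (μ (ball x r))⁻¹ * 1 :=
          mul_le_mul' (ENNReal.inv_le_inv.mpr le_self_add)
            (ratio_pow_le_one hε hr dist_nonneg)
      _ = (μ (ball x r))⁻¹ := mul_one _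
  · intro k z h1 h2
    rw [dist_comm z x] at h1 h2
    have hrad : (0:ℝ) < 2 ^ k * r := by positivity
    have hDk : (μ (ball x (2 ^ k * r)))⁻¹ ≤
        ENNReal.ofReal A * (μ (ball x (2 ^ (k + 1) * r)))⁻¹ := by
      refine inv_le_mul_inv_of_le hA0 (hpos x _ (by positivity)).ne' ?_
      have h3 : (2:ℝ) ^ (k + 1) * r = 2 * (2 ^ k * r) := by ring
      rw [h3]
      exact hdoub x _ hrad
    have hDinv : (μ (ball x r) + μ (ball x (dist x z)))⁻¹ ≤ (μ (ball x (2 ^ k * r)))⁻¹ := by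
      refine ENNReal.inv_le_inv.mpr ?_
      calc μ (ball x (2 ^ k * r)) ≤ μ (ball x (dist x z)) := measure_mono (ball_subset_ball h1)
        _ ≤ μ (ball x r) + μ (ball x (dist x z)) := le_add_self
    have hnum : ENNReal.ofReal ((r / (r + dist x z)) ^ ε) ≤
        ENNReal.ofReal (((2:ℝ)⁻¹) ^ ε) ^ k := by
      rw [← ENNReal.ofReal_pow (by positivity)]
      exact ENNReal.ofReal_le_ofReal (ratio_pow_le hε k hr h1)
    calc (μ (ball x r) + μ (ball x (dist x z)))⁻¹ * ENNReal.ofReal ((r / (r + dist x z)) ^ ε)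
        ≤ (ENNReal.ofReal A * (μ (ball x (2 ^ (k + 1) * r)))⁻¹) *
            ENNReal.ofReal (((2:ℝ)⁻¹) ^ ε) ^ k :=
          mul_le_mul' (hDinv.trans hDk) hnum
      _ = ENNReal.ofReal (((2:ℝ)⁻¹) ^ ε) ^ k * ENNReal.ofReal A *
            (μ (ball x (2 ^ (k + 1) * r)))⁻¹ := by ring

/-- Uniform bound for the integral of the `y`-centered (off-center) kernel. -/
lemma int_kernel_y (μ : Measure M) (A : ℝ) (hA : 1 ≤ A)
    (hdoub : ∀ (x : M) (r : ℝ), 0 < r →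
      μ (ball x (2 * r)) ≤ ENNReal.ofReal A * μ (ball x r))
    (hpos : ∀ (x : M) (r : ℝ), 0 < r → 0 < μ (ball x r))
    (hfin : ∀ (x : M) (r : ℝ), μ (ball x r) < ⊤)
    {ε : ℝ} (hε : 0 < ε) (y : M) {s : ℝ} (hs : 0 < s) :
    ∫⁻ z, (μ (ball y s) + μ (ball z (dist z y)))⁻¹ *
        ENNReal.ofReal ((s / (s + dist z y)) ^ ε) ∂μ ≤
      1 + (1 - ENNReal.ofReal (((2:ℝ)⁻¹) ^ ε))⁻¹ * ENNReal.ofReal (A ^ 2) := by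
  have hA0 : (0:ℝ) < A := lt_of_lt_of_le one_pos hA
  refine annuli_lintegral_le μ y hs hpos hfin _ (ENNReal.ofReal (A ^ 2))
    (ENNReal.ofReal (((2:ℝ)⁻¹) ^ ε)) ?_ ?_
  · intro z hz
    calc (μ (ball y s) + μ (ball z (dist z y)))⁻¹ * ENNReal.ofReal ((s / (s + dist z y)) ^ ε)
        ≤ (μ (ball y s))⁻¹ * 1 :=
          mul_le_mul' (ENNReal.inv_le_inv.mpr le_self_add)
            (ratio_pow_le_one hε hs dist_nonneg)
      _ = (μ (ball y s))⁻¹ := mul_one _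
  · intro k z h1 h2
    have hrad : (0:ℝ) < 2 ^ k * s := by positivity
    -- ball y (2^(k+1) s) ⊆ ball z (2^(k+2) s)
    have hsub : ball y (2 ^ (k + 1) * s) ⊆ ball z (2 * (2 * (2 ^ k * s))) := by
      intro w hw
      rw [mem_ball] at hw ⊢
      have h3 : dist w z ≤ dist w y + dist y z := dist_triangle w y z
      have h4 : dist y z = dist z y := dist_comm y z
      have h5 : (2:ℝ) ^ (k + 1) * s = 2 * (2 ^ k * s) := by ring
      rw [h5] at hw h2
      calc dist w z ≤ dist w y + dist y z := h3
        _ < 2 * (2 ^ k * s) + 2 * (2 ^ k * s) := by rw [h4]; linarith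
        _ = 2 * (2 * (2 ^ k * s)) := by ring
    have hDk : (μ (ball z (2 ^ k * s)))⁻¹ ≤
        ENNReal.ofReal (A ^ 2) * (μ (ball y (2 ^ (k + 1) * s)))⁻¹ := by
      refine inv_le_mul_inv_of_le (by positivity) (hpos y _ (by positivity)).ne' ?_
      calc μ (ball y (2 ^ (k + 1) * s)) ≤ μ (ball z (2 * (2 * (2 ^ k * s)))) :=
            measure_mono hsub
        _ ≤ ENNReal.ofReal A * μ (ball z (2 * (2 ^ k * s))) := hdoub z _ (by positivity)
        _ ≤ ENNReal.ofReal A * (ENNReal.ofReal A * μ (ball z (2 ^ k * s))) :=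
            mul_le_mul_right (hdoub z _ hrad) _
        _ = ENNReal.ofReal (A ^ 2) * μ (ball z (2 ^ k * s)) := by
            rw [← mul_assoc, ← ENNReal.ofReal_mul hA0.le, sq]
    have hDinv : (μ (ball y s) + μ (ball z (dist z y)))⁻¹ ≤ (μ (ball z (2 ^ k * s)))⁻¹ := by
      refine ENNReal.inv_le_inv.mpr ?_
      calc μ (ball z (2 ^ k * s)) ≤ μ (ball z (dist z y)) := measure_mono (ball_subset_ball h1)
        _ ≤ μ (ball y s) + μ (ball z (dist z y)) := le_add_self
    have hnum : ENNReal.ofReal ((s / (s + dist z y)) ^ ε) ≤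
        ENNReal.ofReal (((2:ℝ)⁻¹) ^ ε) ^ k := by
      rw [← ENNReal.ofReal_pow (by positivity)]
      exact ENNReal.ofReal_le_ofReal (ratio_pow_le hε k hs h1)
    calc (μ (ball y s) + μ (ball z (dist z y)))⁻¹ * ENNReal.ofReal ((s / (s + dist z y)) ^ ε)
        ≤ (ENNReal.ofReal (A ^ 2) * (μ (ball y (2 ^ (k + 1) * s)))⁻¹) *
            ENNReal.ofReal (((2:ℝ)⁻¹) ^ ε) ^ k :=
          mul_le_mul' (hDinv.trans hDk) hnum
      _ = ENNReal.ofReal (((2:ℝ)⁻¹) ^ ε) ^ k * ENNReal.ofReal (A ^ 2) *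
            (μ (ball y (2 ^ (k + 1) * s)))⁻¹ := by ring

end corollaries

/-- Kernel-composition estimate on a space of homogeneous type: convolving two
normalized bump-type kernels of widths `r` and `s` yields a kernel of the same
form at the coarser scale `max r s`. -/
theorem kernel_composition_estimate {M : Type*} [MetricSpace M] [MeasurableSpace M]
    [BorelSpace M] (μ : Measure M) (A : ℝ) (hA : 1 ≤ A)
    (hdoub : ∀ (x : M) (r : ℝ), 0 < r →
      μ (ball x (2 * r)) ≤ ENNReal.ofReal A * μ (ball x r))
    (hpos : ∀ (x : M) (r : ℝ), 0 < r → 0 < μ (ball x r))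
    (hfin : ∀ (x : M) (r : ℝ), μ (ball x r) < ⊤)
    (ε : ℝ) (hε : 0 < ε) :
    ∃ C : ℝ, 0 < C ∧ ∀ (x y : M) (r s : ℝ), 0 < r → 0 < s →
      ∫⁻ z : M,
          (μ (ball x r) + μ (ball x (dist x z)))⁻¹ *
            ENNReal.ofReal ((r / (r + dist x z)) ^ ε) *
              ((μ (ball y s) + μ (ball z (dist z y)))⁻¹ *
                ENNReal.ofReal ((s / (s + dist z y)) ^ ε)) ∂μ ≤
        ENNReal.ofReal C *
          ((μ (ball x (max r s)) + μ (ball x (dist x y)))⁻¹ *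
            ENNReal.ofReal ((max r s / (max r s + dist x y)) ^ ε)) := by
  have hA0 : (0:ℝ) < A := lt_of_lt_of_le one_pos hA
  have hδlt : ENNReal.ofReal (((2:ℝ)⁻¹) ^ ε) < 1 :=
    ENNReal.ofReal_lt_one.mpr (Real.rpow_lt_one (by norm_num) (by norm_num) hε)
  set δ : ℝ≥0∞ := ENNReal.ofReal (((2:ℝ)⁻¹) ^ ε) with hδdef
  have hgeo_ne_top : (1 - δ)⁻¹ ≠ ⊤ := ENNReal.inv_ne_top.mpr (tsub_pos_of_lt hδlt).ne'
  set C1 : ℝ≥0∞ := 1 + (1 - δ)⁻¹ * ENNReal.ofReal A with hC1def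
  set C2 : ℝ≥0∞ := 1 + (1 - δ)⁻¹ * ENNReal.ofReal (A ^ 2) with hC2def
  have hC1top : C1 ≠ ⊤ := by
    rw [hC1def]
    exact ENNReal.add_ne_top.mpr ⟨ENNReal.one_ne_top,
      ENNReal.mul_ne_top hgeo_ne_top ENNReal.ofReal_ne_top⟩
  have hC2top : C2 ≠ ⊤ := by
    rw [hC2def]
    exact ENNReal.add_ne_top.mpr ⟨ENNReal.one_ne_top,
      ENNReal.mul_ne_top hgeo_ne_top ENNReal.ofReal_ne_top⟩
  set Ctot : ℝ≥0∞ := ENNReal.ofReal (2 * A ^ 3 * 2 ^ ε) * (C1 + C2) with hCtotdef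
  have hCtot_top : Ctot ≠ ⊤ :=
    ENNReal.mul_ne_top ENNReal.ofReal_ne_top (ENNReal.add_ne_top.mpr ⟨hC1top, hC2top⟩)
  have hC1pos : (0:ℝ≥0∞) < C1 := lt_of_lt_of_le one_pos le_self_add
  have hCtot0 : Ctot ≠ 0 := by
    rw [hCtotdef]
    refine mul_ne_zero ?_ (lt_of_lt_of_le hC1pos le_self_add).ne'
    simp only [ne_eq, ENNReal.ofReal_eq_zero, not_le]
    positivity
  refine ⟨Ctot.toReal, ENNReal.toReal_pos hCtot0 hCtot_top, ?_⟩
  intro x y r s hr hs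
  rw [ENNReal.ofReal_toReal hCtot_top]
  have ht : 0 < max r s := lt_of_lt_of_le hr (le_max_left r s)
  set t := max r s with htdef
  set d := dist x y with hddef
  have hd0 : 0 ≤ d := dist_nonneg
  have htd : 0 < t + d := by linarith
  have hrt : r ≤ t := le_max_left r s
  have hst : s ≤ t := le_max_right r s
  have hE0 : μ (ball x t) + μ (ball x d) ≠ 0 := (lt_of_lt_of_le (hpos x t ht) le_self_add).ne'
  set RK : ℝ≥0∞ := (μ (ball x t) + μ (ball x d))⁻¹ * ENNReal.ofReal ((t / (t + d)) ^ ε)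
    with hRKdef
  have hRKtop : RK ≠ ⊤ :=
    ENNReal.mul_ne_top (ENNReal.inv_ne_top.mpr hE0) ENNReal.ofReal_ne_top
  have hIx := int_kernel_x μ A hA hdoub hpos hfin hε x hr
  have hIy := int_kernel_y μ A hA hdoub hpos hfin hε y hs
  have hconst1 : (2:ℝ) * A * 2 ^ ε ≤ 2 * A ^ 3 * 2 ^ ε := by
    have h1 : A ≤ A ^ 3 := by
      nlinarith [mul_nonneg (mul_nonneg (sub_nonneg.2 hA) hA0.le) (by linarith : (0:ℝ) ≤ A + 1)]
    have h2 : (0:ℝ) ≤ 2 ^ ε := by positivity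
    nlinarith
  have hconst2 : (2:ℝ) * 2 ^ ε ≤ 2 * A ^ 3 * 2 ^ ε := by
    have h1 : (1:ℝ) ≤ A ^ 3 := by
      nlinarith [mul_nonneg (mul_nonneg (sub_nonneg.2 hA) hA0.le) (by linarith : (0:ℝ) ≤ A + 1)]
    have h2 : (0:ℝ) ≤ 2 ^ ε := by positivity
    nlinarith
  by_cases hcase : d ≤ t
  · -- EASY CASE : d ≤ t
    have hbt2 : 1 ≤ 2 * (t / (t + d)) := by
      rw [← mul_div_assoc, le_div_iff₀ htd]
      linarith
    rcases le_total r s with hrs | hsr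
    · -- t = s
      have hts : t = s := max_eq_right hrs
      have hptw : ∀ z : M,
          (μ (ball y s) + μ (ball z (dist z y)))⁻¹ *
            ENNReal.ofReal ((s / (s + dist z y)) ^ ε) ≤
          ENNReal.ofReal (2 * A * 2 ^ ε) * RK := by
        intro z
        have hdzy : 0 ≤ dist z y := dist_nonneg
        rw [hRKdef]
        refine kernel_le hε.le (by positivity) hE0 ?_
          (div_nonneg hs.le (by linarith)) (div_nonneg ht.le (by linarith)) ?_
        · have h1 : μ (ball x d) ≤ μ (ball x t) := measure_mono (ball_subset_ball hcase)
          have h2 : ball x t ⊆ ball y (2 * s) := by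
            intro w hw
            rw [mem_ball] at hw ⊢
            have h3 : dist w y ≤ dist w x + dist x y := dist_triangle w x y
            rw [← hddef] at h3
            have hds : d ≤ s := hts ▸ hcase
            have hws : dist w x < s := by rw [hts] at hw; exact hw
            linarith
          calc μ (ball x t) + μ (ball x d) ≤ μ (ball x t) + μ (ball x t) :=
                add_le_add_right h1 _
            _ = 2 * μ (ball x t) := (two_mul _).symm
            _ ≤ 2 * μ (ball y (2 * s)) := mul_le_mul_right (measure_mono h2) _
            _ ≤ 2 * (ENNReal.ofReal A * μ (ball y s)) := mul_le_mul_right (hdoub y s hs) _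
            _ ≤ 2 * (ENNReal.ofReal A * (μ (ball y s) + μ (ball z (dist z y)))) :=
                mul_le_mul_right (mul_le_mul_right le_self_add _) _
            _ = ENNReal.ofReal (2 * A) * (μ (ball y s) + μ (ball z (dist z y))) := by
                rw [ENNReal.ofReal_mul (by norm_num : (0:ℝ) ≤ 2), ENNReal.ofReal_ofNat,
                  mul_assoc]
        · have h1 : s / (s + dist z y) ≤ 1 := by
            rw [div_le_one (by linarith)]
            linarith
          linarith
      have hP : ENNReal.ofReal (2 * A * 2 ^ ε) * RK ≠ ⊤ :=
        ENNReal.mul_ne_top ENNReal.ofReal_ne_top hRKtop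
      calc ∫⁻ z : M,
          (μ (ball x r) + μ (ball x (dist x z)))⁻¹ *
            ENNReal.ofReal ((r / (r + dist x z)) ^ ε) *
              ((μ (ball y s) + μ (ball z (dist z y)))⁻¹ *
                ENNReal.ofReal ((s / (s + dist z y)) ^ ε)) ∂μ
          ≤ ∫⁻ z : M, (ENNReal.ofReal (2 * A * 2 ^ ε) * RK) *
              ((μ (ball x r) + μ (ball x (dist x z)))⁻¹ *
                ENNReal.ofReal ((r / (r + dist x z)) ^ ε)) ∂μ :=
            lintegral_mono fun z =>
              le_trans (mul_le_mul_right (hptw z) _) (le_of_eq (mul_comm _ _))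
        _ = (ENNReal.ofReal (2 * A * 2 ^ ε) * RK) *
            ∫⁻ z : M, (μ (ball x r) + μ (ball x (dist x z)))⁻¹ *
              ENNReal.ofReal ((r / (r + dist x z)) ^ ε) ∂μ :=
            lintegral_const_mul' _ _ hP
        _ ≤ (ENNReal.ofReal (2 * A * 2 ^ ε) * RK) * C1 := mul_le_mul_right hIx _
        _ ≤ Ctot * RK := by
            rw [hCtotdef]
            calc ENNReal.ofReal (2 * A * 2 ^ ε) * RK * C1
                = (ENNReal.ofReal (2 * A * 2 ^ ε) * C1) * RK := by ring
              _ ≤ (ENNReal.ofReal (2 * A ^ 3 * 2 ^ ε) * (C1 + C2)) * RK :=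
                mul_le_mul_left
                  (mul_le_mul' (ENNReal.ofReal_le_ofReal hconst1) le_self_add) _
    · -- t = r
      have htr : t = r := max_eq_left hsr
      have hptw : ∀ z : M,
          (μ (ball x r) + μ (ball x (dist x z)))⁻¹ *
            ENNReal.ofReal ((r / (r + dist x z)) ^ ε) ≤
          ENNReal.ofReal (2 * 2 ^ ε) * RK := by
        intro z
        have hdxz : 0 ≤ dist x z := dist_nonneg
        rw [hRKdef]
        refine kernel_le hε.le (by norm_num) hE0 ?_
          (div_nonneg hr.le (by linarith)) (div_nonneg ht.le (by linarith)) ?_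
        · calc μ (ball x t) + μ (ball x d) ≤ μ (ball x t) + μ (ball x t) :=
                add_le_add_right (measure_mono (ball_subset_ball hcase)) _
            _ = 2 * μ (ball x t) := (two_mul _).symm
            _ ≤ 2 * (μ (ball x r) + μ (ball x (dist x z))) := by
                rw [htr]; exact mul_le_mul_right le_self_add _
            _ = ENNReal.ofReal 2 * (μ (ball x r) + μ (ball x (dist x z))) := by
                rw [ENNReal.ofReal_ofNat]
        · have h1 : r / (r + dist x z) ≤ 1 := by
            rw [div_le_one (by linarith)]
            linarith
          linarith
      have hP : ENNReal.ofReal (2 * 2 ^ ε) * RK ≠ ⊤ :=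
        ENNReal.mul_ne_top ENNReal.ofReal_ne_top hRKtop
      calc ∫⁻ z : M,
          (μ (ball x r) + μ (ball x (dist x z)))⁻¹ *
            ENNReal.ofReal ((r / (r + dist x z)) ^ ε) *
              ((μ (ball y s) + μ (ball z (dist z y)))⁻¹ *
                ENNReal.ofReal ((s / (s + dist z y)) ^ ε)) ∂μ
          ≤ ∫⁻ z : M, (ENNReal.ofReal (2 * 2 ^ ε) * RK) *
              ((μ (ball y s) + μ (ball z (dist z y)))⁻¹ *
                ENNReal.ofReal ((s / (s + dist z y)) ^ ε)) ∂μ :=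
            lintegral_mono fun z => mul_le_mul_left (hptw z) _
        _ = (ENNReal.ofReal (2 * 2 ^ ε) * RK) *
            ∫⁻ z : M, (μ (ball y s) + μ (ball z (dist z y)))⁻¹ *
              ENNReal.ofReal ((s / (s + dist z y)) ^ ε) ∂μ :=
            lintegral_const_mul' _ _ hP
        _ ≤ (ENNReal.ofReal (2 * 2 ^ ε) * RK) * C2 := mul_le_mul_right hIy _
        _ ≤ Ctot * RK := by
            rw [hCtotdef]
            calc ENNReal.ofReal (2 * 2 ^ ε) * RK * C2
                = (ENNReal.ofReal (2 * 2 ^ ε) * C2) * RK := by ring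
              _ ≤ (ENNReal.ofReal (2 * A ^ 3 * 2 ^ ε) * (C1 + C2)) * RK :=
                mul_le_mul_left
                  (mul_le_mul' (ENNReal.ofReal_le_ofReal hconst2) le_add_self) _
  · -- HARD CASE : t < d
    have htd' : t < d := not_le.1 hcase
    have hd2 : 0 < d / 2 := by linarith
    set Ω₁ : Set M := (fun z : M => dist x z) ⁻¹' Set.Ici (d / 2) with hΩ₁def
    set Ω₂ : Set M := (fun z : M => dist z y) ⁻¹' Set.Ici (d / 2) with hΩ₂def
    have hΩ₁m : MeasurableSet Ω₁ :=
      (continuous_const.dist continuous_id).measurable measurableSet_Ici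
    have hΩ₂m : MeasurableSet Ω₂ :=
      (continuous_id.dist continuous_const).measurable measurableSet_Ici
    have hcover : (Set.univ : Set M) ⊆ Ω₁ ∪ Ω₂ := by
      intro z _
      rcases le_or_gt (d / 2) (dist x z) with h | h
      · exact Or.inl h
      · refine Or.inr ?_
        have h3 : dist x y ≤ dist x z + dist z y := dist_triangle x z y
        rw [← hddef] at h3
        show d / 2 ≤ dist z y
        linarith
    have hb1 : ∀ z ∈ Ω₁,
        (μ (ball x r) + μ (ball x (dist x z)))⁻¹ *
          ENNReal.ofReal ((r / (r + dist x z)) ^ ε) ≤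
        ENNReal.ofReal (2 * A * 2 ^ ε) * RK := by
      intro z hz
      have hzd : d / 2 ≤ dist x z := hz
      have hdxz : 0 ≤ dist x z := dist_nonneg
      rw [hRKdef]
      refine kernel_le hε.le (by positivity) hE0 ?_
        (div_nonneg hr.le (by linarith)) (div_nonneg ht.le (by linarith)) ?_
      · have hdoub' : μ (ball x d) ≤ ENNReal.ofReal A * μ (ball x (d / 2)) := by
          have := hdoub x (d / 2) hd2
          rwa [show 2 * (d / 2) = d by ring] at this
        calc μ (ball x t) + μ (ball x d) ≤ μ (ball x d) + μ (ball x d) :=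
              add_le_add_left (measure_mono (ball_subset_ball htd'.le)) _
          _ = 2 * μ (ball x d) := (two_mul _).symm
          _ ≤ 2 * (ENNReal.ofReal A * μ (ball x (d / 2))) := mul_le_mul_right hdoub' _
          _ ≤ 2 * (ENNReal.ofReal A * (μ (ball x r) + μ (ball x (dist x z)))) :=
              mul_le_mul_right (mul_le_mul_right
                (le_trans (measure_mono (ball_subset_ball hzd)) le_add_self) _) _
          _ = ENNReal.ofReal (2 * A) * (μ (ball x r) + μ (ball x (dist x z))) := by
              rw [ENNReal.ofReal_mul (by norm_num : (0:ℝ) ≤ 2), ENNReal.ofReal_ofNat,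
                mul_assoc]
      · calc r / (r + dist x z) ≤ 2 * t / (t + d) := by
              rw [div_le_div_iff₀ (by linarith) htd]
              nlinarith [mul_le_mul_of_nonneg_right hrt hd0,
                mul_le_mul_of_nonneg_left hzd ht.le]
          _ = 2 * (t / (t + d)) := mul_div_assoc 2 t (t + d)
    have hb2 : ∀ z ∈ Ω₂,
        (μ (ball y s) + μ (ball z (dist z y)))⁻¹ *
          ENNReal.ofReal ((s / (s + dist z y)) ^ ε) ≤
        ENNReal.ofReal (2 * A ^ 3 * 2 ^ ε) * RK := by
      intro z hz
      have hzd : d / 2 ≤ dist z y := hz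
      have hzy0 : 0 < dist z y := lt_of_lt_of_le hd2 hzd
      rw [hRKdef]
      refine kernel_le hε.le (by positivity) hE0 ?_
        (div_nonneg hs.le (by linarith)) (div_nonneg ht.le (by linarith)) ?_
      · have hsub : ball x d ⊆ ball z (2 * (2 * (2 * dist z y))) := by
          intro w hw
          rw [mem_ball] at hw ⊢
          have h4 : dist w z ≤ dist w x + dist x y + dist y z := dist_triangle4 w x y z
          rw [← hddef, dist_comm y z] at h4
          linarith
        have h8 : μ (ball z (2 * (2 * (2 * dist z y)))) ≤
            ENNReal.ofReal (A ^ 3) * μ (ball z (dist z y)) := by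
          calc μ (ball z (2 * (2 * (2 * dist z y))))
              ≤ ENNReal.ofReal A * μ (ball z (2 * (2 * dist z y))) :=
                hdoub z _ (by positivity)
            _ ≤ ENNReal.ofReal A * (ENNReal.ofReal A * μ (ball z (2 * dist z y))) :=
                mul_le_mul_right (hdoub z _ (by positivity)) _
            _ ≤ ENNReal.ofReal A *
                (ENNReal.ofReal A * (ENNReal.ofReal A * μ (ball z (dist z y)))) :=
                mul_le_mul_right (mul_le_mul_right (hdoub z _ hzy0) _) _
            _ = ENNReal.ofReal (A ^ 3) * μ (ball z (dist z y)) := by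
                rw [← mul_assoc, ← mul_assoc, ← ENNReal.ofReal_mul hA0.le,
                  ← ENNReal.ofReal_mul (by positivity), show A * A * A = A ^ 3 by ring]
        calc μ (ball x t) + μ (ball x d) ≤ μ (ball x d) + μ (ball x d) :=
              add_le_add_left (measure_mono (ball_subset_ball htd'.le)) _
          _ = 2 * μ (ball x d) := (two_mul _).symm
          _ ≤ 2 * (ENNReal.ofReal (A ^ 3) * μ (ball z (dist z y))) :=
              mul_le_mul_right (le_trans (measure_mono hsub) h8) _
          _ ≤ 2 * (ENNReal.ofReal (A ^ 3) * (μ (ball y s) + μ (ball z (dist z y)))) :=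
              mul_le_mul_right (mul_le_mul_right le_add_self _) _
          _ = ENNReal.ofReal (2 * A ^ 3) * (μ (ball y s) + μ (ball z (dist z y))) := by
              rw [ENNReal.ofReal_mul (by norm_num : (0:ℝ) ≤ 2), ENNReal.ofReal_ofNat,
                mul_assoc]
      · calc s / (s + dist z y) ≤ 2 * t / (t + d) := by
              rw [div_le_div_iff₀ (by linarith) htd]
              nlinarith [mul_le_mul_of_nonneg_right hst hd0,
                mul_le_mul_of_nonneg_left hzd ht.le]
          _ = 2 * (t / (t + d)) := mul_div_assoc 2 t (t + d)
    have hP1 : ENNReal.ofReal (2 * A * 2 ^ ε) * RK ≠ ⊤ :=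
      ENNReal.mul_ne_top ENNReal.ofReal_ne_top hRKtop
    have hP2 : ENNReal.ofReal (2 * A ^ 3 * 2 ^ ε) * RK ≠ ⊤ :=
      ENNReal.mul_ne_top ENNReal.ofReal_ne_top hRKtop
    have hI1 : ∫⁻ z in Ω₁,
        (μ (ball x r) + μ (ball x (dist x z)))⁻¹ *
          ENNReal.ofReal ((r / (r + dist x z)) ^ ε) *
            ((μ (ball y s) + μ (ball z (dist z y)))⁻¹ *
              ENNReal.ofReal ((s / (s + dist z y)) ^ ε)) ∂μ ≤
        (ENNReal.ofReal (2 * A * 2 ^ ε) * RK) * C2 := by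
      calc ∫⁻ z in Ω₁, _ ∂μ
          ≤ ∫⁻ z in Ω₁, (ENNReal.ofReal (2 * A * 2 ^ ε) * RK) *
              ((μ (ball y s) + μ (ball z (dist z y)))⁻¹ *
                ENNReal.ofReal ((s / (s + dist z y)) ^ ε)) ∂μ :=
            setLIntegral_mono' hΩ₁m fun z hz => mul_le_mul_left (hb1 z hz) _
        _ = (ENNReal.ofReal (2 * A * 2 ^ ε) * RK) *
            ∫⁻ z in Ω₁, (μ (ball y s) + μ (ball z (dist z y)))⁻¹ *
              ENNReal.ofReal ((s / (s + dist z y)) ^ ε) ∂μ :=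
            lintegral_const_mul' _ _ hP1
        _ ≤ (ENNReal.ofReal (2 * A * 2 ^ ε) * RK) *
            ∫⁻ z, (μ (ball y s) + μ (ball z (dist z y)))⁻¹ *
              ENNReal.ofReal ((s / (s + dist z y)) ^ ε) ∂μ :=
            mul_le_mul_right (setLIntegral_le_lintegral _ _) _
        _ ≤ (ENNReal.ofReal (2 * A * 2 ^ ε) * RK) * C2 := mul_le_mul_right hIy _
    have hI2 : ∫⁻ z in Ω₂,
        (μ (ball x r) + μ (ball x (dist x z)))⁻¹ *
          ENNReal.ofReal ((r / (r + dist x z)) ^ ε) *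
            ((μ (ball y s) + μ (ball z (dist z y)))⁻¹ *
              ENNReal.ofReal ((s / (s + dist z y)) ^ ε)) ∂μ ≤
        (ENNReal.ofReal (2 * A ^ 3 * 2 ^ ε) * RK) * C1 := by
      calc ∫⁻ z in Ω₂, _ ∂μ
          ≤ ∫⁻ z in Ω₂, (ENNReal.ofReal (2 * A ^ 3 * 2 ^ ε) * RK) *
              ((μ (ball x r) + μ (ball x (dist x z)))⁻¹ *
                ENNReal.ofReal ((r / (r + dist x z)) ^ ε)) ∂μ :=
            setLIntegral_mono' hΩ₂m fun z hz =>
              le_trans (mul_le_mul_right (hb2 z hz) _) (le_of_eq (mul_comm _ _))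
        _ = (ENNReal.ofReal (2 * A ^ 3 * 2 ^ ε) * RK) *
            ∫⁻ z in Ω₂, (μ (ball x r) + μ (ball x (dist x z)))⁻¹ *
              ENNReal.ofReal ((r / (r + dist x z)) ^ ε) ∂μ :=
            lintegral_const_mul' _ _ hP2
        _ ≤ (ENNReal.ofReal (2 * A ^ 3 * 2 ^ ε) * RK) *
            ∫⁻ z, (μ (ball x r) + μ (ball x (dist x z)))⁻¹ *
              ENNReal.ofReal ((r / (r + dist x z)) ^ ε) ∂μ :=
            mul_le_mul_right (setLIntegral_le_lintegral _ _) _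
        _ ≤ (ENNReal.ofReal (2 * A ^ 3 * 2 ^ ε) * RK) * C1 := mul_le_mul_right hIx _
    calc ∫⁻ z : M,
        (μ (ball x r) + μ (ball x (dist x z)))⁻¹ *
          ENNReal.ofReal ((r / (r + dist x z)) ^ ε) *
            ((μ (ball y s) + μ (ball z (dist z y)))⁻¹ *
              ENNReal.ofReal ((s / (s + dist z y)) ^ ε)) ∂μ
        = ∫⁻ z in Set.univ,
            (μ (ball x r) + μ (ball x (dist x z)))⁻¹ *
              ENNReal.ofReal ((r / (r + dist x z)) ^ ε) *
                ((μ (ball y s) + μ (ball z (dist z y)))⁻¹ *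
                  ENNReal.ofReal ((s / (s + dist z y)) ^ ε)) ∂μ :=
          (setLIntegral_univ _).symm
      _ ≤ ∫⁻ z in Ω₁ ∪ Ω₂,
            (μ (ball x r) + μ (ball x (dist x z)))⁻¹ *
              ENNReal.ofReal ((r / (r + dist x z)) ^ ε) *
                ((μ (ball y s) + μ (ball z (dist z y)))⁻¹ *
                  ENNReal.ofReal ((s / (s + dist z y)) ^ ε)) ∂μ :=
          lintegral_mono_set hcover
      _ ≤ (ENNReal.ofReal (2 * A * 2 ^ ε) * RK) * C2 +
            (ENNReal.ofReal (2 * A ^ 3 * 2 ^ ε) * RK) * C1 :=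
          le_trans (lintegral_union_le _ _ _) (add_le_add hI1 hI2)
      _ ≤ Ctot * RK := by
          rw [hCtotdef]
          calc (ENNReal.ofReal (2 * A * 2 ^ ε) * RK) * C2 +
                (ENNReal.ofReal (2 * A ^ 3 * 2 ^ ε) * RK) * C1
              = (ENNReal.ofReal (2 * A * 2 ^ ε) * C2 +
                  ENNReal.ofReal (2 * A ^ 3 * 2 ^ ε) * C1) * RK := by ring
            _ ≤ (ENNReal.ofReal (2 * A ^ 3 * 2 ^ ε) * C2 +
                  ENNReal.ofReal (2 * A ^ 3 * 2 ^ ε) * C1) * RK :=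
                mul_le_mul_left (add_le_add_left
                  (mul_le_mul_left (ENNReal.ofReal_le_ofReal hconst1) _) _) _
            _ = (ENNReal.ofReal (2 * A ^ 3 * 2 ^ ε) * (C1 + C2)) * RK := by ring
end
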